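/- Abel's multinomial recurrence: for every m ≥ 1, every n ≥ 0, all positive reals x_1,…,x_m, and all integers p_1,…,p_m, one has A_n(x_1,…,x_m; p_1,…,p_m) = Σ_{s=0}^{n} C(n,s)·s!·(x_1+s)·A_{n-s}(x_1+s, x_2,…,x_m; p_1−1, p_2,…,p_m). -/

import Mathlib

open Finset

private lemma multinomial_cast_real {m : ℕ} (s : Fin m → ℕ) :
    (Nat.multinomial Finset.univ s : ℝ) =
      (Nat.factorial (∑ j, s j) : ℝ) / ∏ j, (Nat.factorial (s j) : ℝ) := by
  have hpos : (0:ℝ) < ∏ j, (Nat.factorial (s j) : ℝ) :=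
    Finset.prod_pos fun j _ => by exact_mod_cast (s j).factorial_pos
  rw [eq_div_iff hpos.ne', mul_comm, ← Nat.cast_prod, ← Nat.cast_mul,
    Nat.multinomial_spec, Nat.cast_inj]

private lemma abel_key (y : ℝ) (hy : 0 < y) (k : ℕ) :
    ∑ s ∈ range (k+1),
      (k.factorial : ℝ) / ((k-s).factorial) * (y + s) * (y + k) ^ ((k:ℤ) - s - 1)
      = (y + k) ^ (k:ℕ) := by
  have hyk : (0:ℝ) < y + k := by positivity
  set F : ℕ → ℝ := fun s =>
    if s ≤ k then (k.factorial : ℝ)/((k-s).factorial) * (y+k)^((k:ℤ)-s) else 0 with hF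
  have hterm : ∀ s ∈ range (k+1),
      (k.factorial : ℝ) / ((k-s).factorial) * (y + s) * (y + k) ^ ((k:ℤ) - s - 1)
        = F s - F (s+1) := by
    intro s hs
    rw [mem_range, Nat.lt_succ_iff] at hs
    rcases eq_or_lt_of_le hs with rfl | hlt
    · rw [show ((s:ℤ) - s - 1) = -1 by ring, zpow_neg_one]
      have h2 : F s = s.factorial := by simp [hF]
      have h3 : F (s+1) = 0 := by simp [hF]
      rw [h2, h3, Nat.sub_self, sub_zero, Nat.factorial_zero, Nat.cast_one, div_one,
        mul_assoc, mul_inv_cancel₀ hyk.ne', mul_one]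
    · have hs1 : s + 1 ≤ k := hlt
      have hsub : k - (s+1) = k - s - 1 := by omega
      have h3 : ((k - s : ℕ) : ℝ) = (k:ℝ) - s := by push_cast [Nat.cast_sub hs]; ring
      have hfac : ((k-s).factorial : ℝ) = ((k:ℝ) - s) * ((k-s-1).factorial : ℝ) := by
        have h2 : k - s = (k - s - 1) + 1 := by omega
        rw [h2, Nat.factorial_succ, Nat.cast_mul, ← h2, h3]
      have hzp : (y+(k:ℝ))^((k:ℤ)-s) = (y+k)^((k:ℤ)-s-1) * (y+k) := by
        rw [← zpow_add_one₀ hyk.ne', show (k:ℤ)-s-1+1 = (k:ℤ)-s by ring]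
      have hzp2 : (k:ℤ) - (↑(s+1)) = (k:ℤ) - s - 1 := by push_cast; ring
      simp only [hF, hs, if_true, hs1, if_true, hsub, hzp2, hzp]
      have hks : ((k:ℝ) - s) ≠ 0 := by
        have : (s:ℝ) < k := by exact_mod_cast hlt
        linarith
      have hne2 : ((k-s-1).factorial : ℝ) ≠ 0 := by exact_mod_cast (k-s-1).factorial_ne_zero
      rw [hfac]
      field_simp
      ring
  rw [Finset.sum_congr rfl hterm, Finset.sum_range_sub']
  have h0 : F 0 = (y+k)^(k:ℕ) := by
    simp only [hF, Nat.zero_le, if_true, Nat.sub_zero, Nat.cast_zero, sub_zero,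
      div_self (show (k.factorial:ℝ) ≠ 0 by exact_mod_cast k.factorial_ne_zero), one_mul,
      zpow_natCast]
  have hk1 : F (k+1) = 0 := by simp [hF]
  rw [h0, hk1, sub_zero]

private lemma abel_coeff (y : ℝ) (hy : 0 < y) (n k : ℕ) (hk : k ≤ n) (q : ℤ) :
    ∑ s ∈ range (k+1),
      (n.choose s : ℝ) * (s.factorial : ℝ) * (y + s) *
        ((n - s).factorial / ((k - s).factorial : ℝ)) * (y + k) ^ (((k - s : ℕ) : ℤ) + q - 1)
      = (n.factorial : ℝ) / (k.factorial : ℝ) * (y + k) ^ ((k:ℤ) + q) := by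
  have hyk : (0:ℝ) < y + k := by positivity
  have hkf : ((k.factorial : ℝ)) ≠ 0 := by exact_mod_cast k.factorial_ne_zero
  have hmain : ∀ s ∈ range (k+1),
      (n.choose s : ℝ) * (s.factorial : ℝ) * (y + s) *
        ((n - s).factorial / ((k - s).factorial : ℝ)) * (y + k) ^ (((k - s : ℕ) : ℤ) + q - 1)
      = ((n.factorial : ℝ) / (k.factorial : ℝ) * (y + k) ^ q) *
        ((k.factorial : ℝ) / ((k-s).factorial) * (y + s) * (y + k) ^ ((k:ℤ) - s - 1)) := by
    intro s hs
    rw [mem_range, Nat.lt_succ_iff] at hs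
    have hsn : s ≤ n := hs.trans hk
    have hnf : (n.choose s : ℝ) * (s.factorial : ℝ) * ((n-s).factorial : ℝ) = n.factorial := by
      exact_mod_cast congrArg (Nat.cast (R := ℝ)) (Nat.choose_mul_factorial_mul_factorial hsn)
    have hexp : ((k - s : ℕ) : ℤ) + q - 1 = q + ((k:ℤ) - s - 1) := by
      push_cast [Nat.cast_sub hs]; ring
    have hc : (k.factorial : ℝ) * ((k.factorial : ℝ))⁻¹ = 1 := mul_inv_cancel₀ hkf
    rw [hexp, zpow_add₀ hyk.ne', div_eq_mul_inv ((n-s).factorial:ℝ),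
      div_eq_mul_inv (n.factorial:ℝ), div_eq_mul_inv (k.factorial:ℝ)]
    calc (n.choose s : ℝ) * (s.factorial : ℝ) * (y + s) *
          ((n - s).factorial * (((k - s).factorial : ℝ))⁻¹) *
          ((y + k) ^ q * (y + k) ^ ((k:ℤ) - s - 1))
        = ((n.choose s : ℝ) * (s.factorial : ℝ) * ((n-s).factorial : ℝ)) *
          (((k - s).factorial : ℝ))⁻¹ * (y + s) *
          ((y + k) ^ q * (y + k) ^ ((k:ℤ) - s - 1)) := by ring
      _ = (n.factorial : ℝ) * (((k - s).factorial : ℝ))⁻¹ * (y + s) *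
          ((y + k) ^ q * (y + k) ^ ((k:ℤ) - s - 1)) := by rw [hnf]
      _ = ((k.factorial : ℝ) * ((k.factorial : ℝ))⁻¹) * ((n.factorial : ℝ) *
          (((k - s).factorial : ℝ))⁻¹ * (y + s) *
          ((y + k) ^ q * (y + k) ^ ((k:ℤ) - s - 1))) := by rw [hc, one_mul]
      _ = (n.factorial : ℝ) * ((k.factorial:ℝ))⁻¹ * (y + k) ^ q *
          ((k.factorial : ℝ) * (((k-s).factorial : ℝ))⁻¹ * (y + s) *
            (y + k) ^ ((k:ℤ) - s - 1)) := by ring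
  rw [Finset.sum_congr rfl hmain, ← Finset.mul_sum, abel_key y hy k,
    zpow_add₀ hyk.ne', zpow_natCast]
  ring

private lemma abel_inner (y : ℝ) (hy : 0 < y) (n k : ℕ) (hk : k ≤ n) (q : ℤ) :
    ∑ sc ∈ Finset.HasAntidiagonal.antidiagonal k,
      (n.choose sc.1 : ℝ) * (sc.1.factorial : ℝ) * (y + sc.1) *
        (((n - sc.1).factorial : ℝ) / (sc.2.factorial : ℝ)) *
        (y + sc.1 + sc.2) ^ ((sc.2 : ℤ) + q - 1)
      = (n.factorial : ℝ) / (k.factorial : ℝ) * (y + k) ^ ((k:ℤ) + q) := by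
  rw [Finset.Nat.sum_antidiagonal_eq_sum_range_succ_mk, ← abel_coeff y hy n k hk q]
  apply Finset.sum_congr rfl
  intro s hs
  rw [mem_range, Nat.lt_succ_iff] at hs
  have h1 : y + (s:ℝ) + ((k - s : ℕ) : ℝ) = y + k := by
    push_cast [Nat.cast_sub hs]; ring
  rw [h1]

private lemma sum_antidiagonalTuple_succ {M : Type*} [AddCommMonoid M] (m n : ℕ)
    (f : (Fin (m+1) → ℕ) → M) :
    ∑ s ∈ Finset.Nat.antidiagonalTuple (m+1) n, f s =
      ∑ ab ∈ Finset.HasAntidiagonal.antidiagonal n, ∑ t ∈ Finset.Nat.antidiagonalTuple m ab.2,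
        f (Fin.cons ab.1 t) := by
  rw [Finset.sum_sigma']
  refine Finset.sum_nbij' (fun s => ⟨(s 0, ∑ j, s (Fin.succ j)), Fin.tail s⟩)
    (fun z => Fin.cons z.1.1 z.2) ?_ ?_ ?_ ?_ ?_
  · intro s hs
    rw [Finset.Nat.mem_antidiagonalTuple, Fin.sum_univ_succ] at hs
    simp only [Finset.mem_sigma, Finset.HasAntidiagonal.mem_antidiagonal, Finset.Nat.mem_antidiagonalTuple]
    exact ⟨hs, rfl⟩
  · intro z hz
    simp only [Finset.mem_sigma, Finset.HasAntidiagonal.mem_antidiagonal,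
      Finset.Nat.mem_antidiagonalTuple] at hz
    rw [Finset.Nat.mem_antidiagonalTuple, Fin.sum_univ_succ]
    simp only [Fin.cons_zero, Fin.cons_succ]
    rw [hz.2, hz.1]
  · intro s hs
    simp only [Fin.cons_self_tail]
  · intro z hz
    simp only [Finset.mem_sigma, Finset.HasAntidiagonal.mem_antidiagonal,
      Finset.Nat.mem_antidiagonalTuple] at hz
    obtain ⟨⟨a, b⟩, t⟩ := z
    simp only [Fin.cons_zero, Fin.cons_succ, Fin.tail_cons] at hz ⊢
    rw [hz.2]
  · intro s hs
    simp [Fin.cons_self_tail]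

private lemma triple_reindex {M : Type*} [AddCommMonoid M] (n : ℕ) (h : ℕ → ℕ → ℕ → M) :
    ∑ s ∈ range (n+1), ∑ cd ∈ Finset.HasAntidiagonal.antidiagonal (n-s), h s cd.1 cd.2
      = ∑ ab ∈ Finset.HasAntidiagonal.antidiagonal n, ∑ sc ∈ Finset.HasAntidiagonal.antidiagonal ab.1, h sc.1 sc.2 ab.2 := by
  rw [Finset.sum_sigma', Finset.sum_sigma']
  refine Finset.sum_nbij' (fun z => ⟨(z.1 + z.2.1, z.2.2), (z.1, z.2.1)⟩)
    (fun z => ⟨z.2.1, (z.2.2, z.1.2)⟩) ?_ ?_ ?_ ?_ ?_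
  · rintro ⟨s, c, d⟩ hz
    simp only [Finset.mem_sigma, Finset.mem_range, Finset.HasAntidiagonal.mem_antidiagonal] at hz ⊢
    exact ⟨by omega, trivial⟩
  · rintro ⟨⟨k, r⟩, s, c⟩ hz
    simp only [Finset.mem_sigma, Finset.mem_range, Finset.HasAntidiagonal.mem_antidiagonal] at hz ⊢
    omega
  · rintro ⟨s, c, d⟩ hz
    rfl
  · rintro ⟨⟨k, r⟩, s, c⟩ hz
    simp only [Finset.mem_sigma, Finset.HasAntidiagonal.mem_antidiagonal] at hz
    have : s + c = k := hz.2
    subst this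
    rfl
  · rintro ⟨s, c, d⟩ hz
    rfl

/-- The Abel sum `A_n(x_1,…,x_m; p_1,…,p_m)`: the sum over tuples `s` of nonnegative
integers with `s_1 + ⋯ + s_m = n` of the multinomial coefficient `n!/(s_1!⋯s_m!)`
times `∏_j (x_j + s_j)^(s_j + p_j)`, powers taken in `ℝ` (`zpow`). -/
noncomputable def abelA (m n : ℕ) (x : Fin m → ℝ) (p : Fin m → ℤ) : ℝ :=
  ∑ s ∈ Finset.Nat.antidiagonalTuple m n,
    (Nat.multinomial Finset.univ s : ℝ) * ∏ j, (x j + s j) ^ ((s j : ℤ) + p j)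

/-- Abel's multinomial recurrence (stated with `m + 1 ≥ 1` variables, the first
variable playing the role of `x_1`):
`A_n(x; p) = Σ_{s=0}^n C(n,s)·s!·(x_1+s)·A_{n-s}(x_1+s, x_2,…,x_m; p_1−1, p_2,…,p_m)`. -/
theorem abel_multinomial_recurrence (m n : ℕ)
    (x : Fin (m + 1) → ℝ) (hx : ∀ j, 0 < x j) (p : Fin (m + 1) → ℤ) :
    abelA (m + 1) n x p =
      ∑ s ∈ Finset.range (n + 1),
        (n.choose s : ℝ) * (s.factorial : ℝ) * (x 0 + s) *
          abelA (m + 1) (n - s) (Function.update x 0 (x 0 + s))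
            (Function.update p 0 (p 0 - 1)) := by
  have hX : (0:ℝ) < x 0 := hx 0
  set T : (Fin m → ℕ) → ℝ := fun t => ∏ j, (x j.succ + t j) ^ ((t j : ℤ) + p j.succ) with hT
  set P : (Fin m → ℕ) → ℝ := fun t => ∏ j, ((t j).factorial : ℝ) with hP
  have hPne : ∀ t : Fin m → ℕ, P t ≠ 0 := fun t =>
    (Finset.prod_pos fun j _ => by exact_mod_cast (t j).factorial_pos).ne'
  -- Step B : LHS in split form
  have hLHS : abelA (m+1) n x p =
      ∑ ab ∈ Finset.HasAntidiagonal.antidiagonal n, ∑ t ∈ Finset.Nat.antidiagonalTuple m ab.2,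
        (n.factorial : ℝ) / ((ab.1.factorial : ℝ) * P t) *
          (x 0 + ab.1) ^ ((ab.1 : ℤ) + p 0) * T t := by
    rw [abelA, sum_antidiagonalTuple_succ]
    refine Finset.sum_congr rfl fun ab hab => Finset.sum_congr rfl fun t ht => ?_
    rw [Finset.HasAntidiagonal.mem_antidiagonal] at hab
    rw [Finset.Nat.mem_antidiagonalTuple] at ht
    rw [multinomial_cast_real]
    have hsum : ∑ j, (Fin.cons ab.1 t : Fin (m+1) → ℕ) j = n := by
      rw [Fin.sum_univ_succ]
      simp only [Fin.cons_zero, Fin.cons_succ]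
      rw [ht, hab]
    have hprodfac : (∏ j, (((Fin.cons ab.1 t : Fin (m+1) → ℕ) j).factorial : ℝ))
        = (ab.1.factorial : ℝ) * P t := by
      rw [Fin.prod_univ_succ]
      simp only [Fin.cons_zero, Fin.cons_succ, hP]
    have hprodpow : (∏ j, (x j + ((Fin.cons ab.1 t : Fin (m+1) → ℕ) j : ℝ)) ^
          ((((Fin.cons ab.1 t : Fin (m+1) → ℕ) j : ℕ) : ℤ) + p j))
        = (x 0 + ab.1) ^ ((ab.1 : ℤ) + p 0) * T t := by
      rw [Fin.prod_univ_succ]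
      simp only [Fin.cons_zero, Fin.cons_succ, hT]
    rw [hsum, hprodfac, hprodpow]
    ring
  -- Step A : RHS in split form
  have hRHS : ∀ s ∈ range (n+1),
      (n.choose s : ℝ) * (s.factorial : ℝ) * (x 0 + s) *
          abelA (m + 1) (n - s) (Function.update x 0 (x 0 + s))
            (Function.update p 0 (p 0 - 1))
      = ∑ cd ∈ Finset.HasAntidiagonal.antidiagonal (n - s), ∑ t ∈ Finset.Nat.antidiagonalTuple m cd.2,
          (n.choose s : ℝ) * (s.factorial : ℝ) * (x 0 + s) *
            (((n - s).factorial : ℝ) / ((cd.1.factorial : ℝ) * P t)) *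
            (x 0 + s + cd.1) ^ ((cd.1 : ℤ) + p 0 - 1) * T t := by
    intro s hs
    rw [abelA, sum_antidiagonalTuple_succ, Finset.mul_sum]
    refine Finset.sum_congr rfl fun cd hcd => ?_
    rw [Finset.mul_sum]
    refine Finset.sum_congr rfl fun t ht => ?_
    rw [Finset.HasAntidiagonal.mem_antidiagonal] at hcd
    rw [Finset.Nat.mem_antidiagonalTuple] at ht
    rw [multinomial_cast_real]
    have hsum : ∑ j, (Fin.cons cd.1 t : Fin (m+1) → ℕ) j = n - s := by
      rw [Fin.sum_univ_succ]
      simp only [Fin.cons_zero, Fin.cons_succ]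
      rw [ht, hcd]
    have hprodfac : (∏ j, (((Fin.cons cd.1 t : Fin (m+1) → ℕ) j).factorial : ℝ))
        = (cd.1.factorial : ℝ) * P t := by
      rw [Fin.prod_univ_succ]
      simp only [Fin.cons_zero, Fin.cons_succ, hP]
    have hprodpow : (∏ j, (Function.update x 0 (x 0 + s) j +
            ((Fin.cons cd.1 t : Fin (m+1) → ℕ) j : ℝ)) ^
          ((((Fin.cons cd.1 t : Fin (m+1) → ℕ) j : ℕ) : ℤ) + Function.update p 0 (p 0 - 1) j))
        = (x 0 + s + cd.1) ^ ((cd.1 : ℤ) + p 0 - 1) * T t := by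
      rw [Fin.prod_univ_succ]
      simp only [Fin.cons_zero, Fin.cons_succ, Function.update_self, hT, ← add_sub_assoc]
      congr 1
    rw [hsum, hprodfac, hprodpow]
    ring
  rw [hLHS, Finset.sum_congr rfl hRHS]
  refine Eq.trans ?_ (triple_reindex n (fun s c d =>
    ∑ t ∈ Finset.Nat.antidiagonalTuple m d,
      (n.choose s : ℝ) * (s.factorial : ℝ) * (x 0 + s) *
        (((n - s).factorial : ℝ) / ((c.factorial : ℝ) * P t)) *
        (x 0 + s + c) ^ ((c : ℤ) + p 0 - 1) * T t)).symm
  -- Now per ab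
  refine Finset.sum_congr rfl fun ab hab => ?_
  rw [Finset.HasAntidiagonal.mem_antidiagonal] at hab
  have hk : ab.1 ≤ n := by omega
  rw [Finset.sum_comm]
  refine Finset.sum_congr rfl fun t ht => ?_
  have hstep : ∀ sc ∈ Finset.HasAntidiagonal.antidiagonal ab.1,
      (n.choose sc.1 : ℝ) * (sc.1.factorial : ℝ) * (x 0 + sc.1) *
          (((n - sc.1).factorial : ℝ) / ((sc.2.factorial : ℝ) * P t)) *
          (x 0 + sc.1 + sc.2) ^ ((sc.2 : ℤ) + p 0 - 1) * T t
      = ((n.choose sc.1 : ℝ) * (sc.1.factorial : ℝ) * (x 0 + sc.1) *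
          (((n - sc.1).factorial : ℝ) / (sc.2.factorial : ℝ)) *
          (x 0 + sc.1 + sc.2) ^ ((sc.2 : ℤ) + p 0 - 1)) * ((P t)⁻¹ * T t) := by
    intro sc hsc
    rw [div_eq_mul_inv, div_eq_mul_inv, mul_inv]
    ring
  rw [Finset.sum_congr rfl hstep, ← Finset.sum_mul, abel_inner (x 0) hX n ab.1 hk (p 0)]
  rw [div_eq_mul_inv, div_eq_mul_inv, mul_inv]
  ring
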